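/- Let F be a family of subsets of a finite set L closed under set difference and containing ∅ and L. Define an equivalence relation on L by x ~ y iff every set in F contains both or neither of x, y. Then F contains all singletons if and only if every equivalence class of ~ is a singleton. -/

import Mathlib

theorem stmt_19 {L : Type*} [Finite L] (F : Set (Set L))
    (h_empty : ∅ ∈ F) (h_univ : Set.univ ∈ F)
    (h_diff : ∀ A ∈ F, ∀ B ∈ F, A \ B ∈ F) :
    (∀ x : L, {x} ∈ F) ↔
      ∀ x y : L, (∀ S ∈ F, (x ∈ S ↔ y ∈ S)) → x = y := by
  constructor
  · intro hs x y h
    have := h {x} (hs x)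
    simpa [eq_comm] using this.mp rfl
  · intro hsep x
    classical
    have h_compl : ∀ S ∈ F, Sᶜ ∈ F := fun S hS => by
      simpa [Set.compl_eq_univ_diff] using h_diff _ h_univ _ hS
    have h_inter : ∀ A ∈ F, ∀ B ∈ F, A ∩ B ∈ F := fun A hA B hB => by
      have h1 : A \ (A \ B) = A ∩ B := by
        ext z; simp only [Set.mem_diff, Set.mem_inter_iff]; tauto
      rw [← h1]
      exact h_diff _ hA _ (h_diff _ hA _ hB)
    set f : Set L → Set L := fun S => if x ∈ S then S else Sᶜ with hf
    have hfF : ∀ S ∈ F, f S ∈ F := fun S hS => by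
      by_cases hx : x ∈ S <;> simp only [hf, hx, if_true, if_false]
      · exact hS
      · exact h_compl S hS
    have key : ∀ G : Set (Set L), G.Finite → G ⊆ F → (⋂ S ∈ G, f S) ∈ F := by
      intro G hG
      refine Set.Finite.induction_on G hG ?_ ?_
      · intro _; simpa using h_univ
      · intro a s _ _ ih hsub
        have heq : (⋂ S ∈ insert a s, f S) = f a ∩ ⋂ S ∈ s, f S := by
          simp [Set.biInter_insert]
        rw [heq]
        exact h_inter _ (hfF a (hsub (Set.mem_insert a s))) _
          (ih fun S hS => hsub (Set.mem_insert_of_mem a hS))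
    have hT : (⋂ S ∈ F, f S) ∈ F := key F (Set.toFinite F) (le_refl F)
    have hTeq : (⋂ S ∈ F, f S) = {x} := by
      ext y
      simp only [Set.mem_iInter, Set.mem_singleton_iff]
      constructor
      · intro hy
        refine (hsep x y ?_).symm
        intro S hS
        have hyS := hy S hS
        by_cases hx : x ∈ S
        · simp only [hf, hx, if_true] at hyS; tauto
        · simp only [hf, hx, if_false] at hyS
          exact ⟨fun h => absurd h hx, fun h => absurd h hyS⟩
      · rintro rfl S hS
        simp only [hf]
        split_ifs with hx
        · exact hx
        · exact hx
    rw [← hTeq]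
    exact hT
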